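/- Let A be a finite set of integers with min(A)=0, max(A)=N, let I be a finite nonempty set of integers, and let τ > N be an integer. Then for any positive integer h with h < τ/N, the set A' = ⋃_{j∈I}(jτ + A) satisfies |hA'| = |hI| · |hA|. -/
import Mathlib

open Finset Pointwise

/-- `hsum h A` is the `h`-fold sumset of `A` (pointwise sum of `h` copies). -/
def hsum (h : ℕ) (A : Finset ℤ) : Finset ℤ := ∑ _i ∈ Finset.range h, A

/-- `transl t A` is the translate `t + A`. -/
def transl (t : ℤ) (A : Finset ℤ) : Finset ℤ := A.image (t + ·)

lemma hsum_zero (A : Finset ℤ) : hsum 0 A = 0 := Finset.sum_range_zero _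

lemma hsum_succ (h : ℕ) (A : Finset ℤ) : hsum (h+1) A = hsum h A + A :=
  Finset.sum_range_succ _ _

lemma hsum_mem_bounds {A : Finset ℤ} (hAne : A.Nonempty) (h : ℕ) {x : ℤ}
    (hx : x ∈ hsum h A) : (h:ℤ) * A.min' hAne ≤ x ∧ x ≤ (h:ℤ) * A.max' hAne := by
  induction h generalizing x with
  | zero => simp only [hsum_zero, Finset.mem_zero] at hx; simp [hx]
  | succ n ih =>
    rw [hsum_succ, Finset.mem_add] at hx
    obtain ⟨y, hy, a, ha, rfl⟩ := hx
    have h0 := ih hy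
    have h1 := A.min'_le a ha
    have h2 := A.le_max' a ha
    constructor <;> push_cast <;> nlinarith [h0.1, h0.2]

lemma hsum_add (h : ℕ) (B C : Finset ℤ) : hsum h (B + C) = hsum h B + hsum h C := by
  induction h with
  | zero => simp [hsum_zero]
  | succ n ih =>
    rw [hsum_succ, hsum_succ, hsum_succ, ih, add_add_add_comm]

lemma hsum_image_mul (h : ℕ) (I : Finset ℤ) (τ : ℤ) :
    hsum h (I.image (fun j => j * τ)) = (hsum h I).image (fun j => j * τ) := by
  induction h with
  | zero =>
    simp only [hsum_zero]
    ext x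
    simp [Finset.mem_zero, eq_comm]
  | succ n ih =>
    rw [hsum_succ, hsum_succ, ih]
    ext x
    simp only [Finset.mem_add, Finset.mem_image]
    constructor
    · rintro ⟨y, ⟨k, hk, rfl⟩, a, ⟨j, hj, rfl⟩, rfl⟩
      exact ⟨k + j, ⟨k, hk, j, hj, rfl⟩, by ring⟩
    · rintro ⟨s, ⟨k, hk, j, hj, rfl⟩, rfl⟩
      exact ⟨k * τ, ⟨k, hk, rfl⟩, j * τ, ⟨j, hj, rfl⟩, by ring⟩

lemma add_eq_biUnion (B C : Finset ℤ) : B + C = B.biUnion fun b => C.image (b + ·) := by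
  ext x
  simp only [Finset.mem_add, Finset.mem_biUnion, Finset.mem_image]

theorem stmt_1 (A I : Finset ℤ) (hAne : A.Nonempty) (hIne : I.Nonempty) (N τ : ℤ)
    (hmin : A.min' hAne = 0) (hmax : A.max' hAne = N) (hτ : N < τ)
    (h : ℕ) (hh : 1 ≤ h) (hlt : (h : ℤ) * N < τ) :
    (hsum h (I.biUnion fun j => transl (j * τ) A)).card =
      (hsum h I).card * (hsum h A).card := by
  have hN0 : (0:ℤ) ≤ N := by rw [← hmin, ← hmax]; exact A.min'_le _ (A.max'_mem hAne)
  have hτ0 : (0:ℤ) < τ := lt_of_le_of_lt hN0 hτ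
  have hA' : (I.biUnion fun j => transl (j * τ) A) = I.image (fun j => j * τ) + A := by
    ext x
    simp only [Finset.mem_biUnion, transl, Finset.mem_image, Finset.mem_add]
    constructor
    · rintro ⟨j, hj, a, ha, rfl⟩; exact ⟨j * τ, ⟨j, hj, rfl⟩, a, ha, rfl⟩
    · rintro ⟨y, ⟨j, hj, rfl⟩, a, ha, rfl⟩; exact ⟨j, hj, a, ha, rfl⟩
  rw [hA', hsum_add, hsum_image_mul]
  have hCb : ∀ x ∈ hsum h A, 0 ≤ x ∧ x ≤ (h:ℤ) * N := by
    intro x hx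
    have := hsum_mem_bounds hAne h hx
    rw [hmin, hmax, mul_zero] at this
    exact this
  have hinj : Function.Injective (fun j : ℤ => j * τ) := fun a b hab => by
    have : a * τ = b * τ := hab
    exact mul_right_cancel₀ (ne_of_gt hτ0) this
  have hdisj : ∀ t₁ ∈ (hsum h I).image (fun j => j * τ), ∀ t₂ ∈ (hsum h I).image (fun j => j * τ),
      t₁ ≠ t₂ → Disjoint ((hsum h A).image (t₁ + ·)) ((hsum h A).image (t₂ + ·)) := by
    rintro t₁ ht₁ t₂ ht₂ hne
    simp only [Finset.mem_image] at ht₁ ht₂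
    obtain ⟨k₁, hk₁, rfl⟩ := ht₁
    obtain ⟨k₂, hk₂, rfl⟩ := ht₂
    have hkne : k₁ ≠ k₂ := fun e => hne (by rw [e])
    rw [Finset.disjoint_left]
    rintro z hz1 hz2
    simp only [Finset.mem_image] at hz1 hz2
    obtain ⟨x, hx, rfl⟩ := hz1
    obtain ⟨y, hy, hxy⟩ := hz2
    have hbx := hCb x hx
    have hby := hCb y hy
    rcases lt_trichotomy k₁ k₂ with hlt' | heq | hgt
    · nlinarith [hbx.1, hbx.2, hby.1, hby.2]
    · exact hkne heq
    · nlinarith [hbx.1, hbx.2, hby.1, hby.2]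
  rw [add_eq_biUnion, Finset.card_biUnion hdisj]
  have hconst : ∀ t ∈ (hsum h I).image (fun j => j * τ),
      ((hsum h A).image (t + ·)).card = (hsum h A).card := by
    intro t _
    exact Finset.card_image_of_injective _ (add_right_injective t)
  rw [Finset.sum_congr rfl hconst, Finset.sum_const, Finset.card_image_of_injective _ hinj,
    smul_eq_mul]
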